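/- The polynomials P̃_n^{(α,c)} satisfy the mixed-parameter three-term relation x·P̃_n^{(α+1,c)}(x) = (n/c³)·P̃_{n-1}^{(α,c)}(x) + ((c(n+α+1)+1)/c²)·P̃_n^{(α,c)}(x) + P̃_{n+1}^{(α,c)}(x) for n ≥ 1. -/

import Mathlib

/-- Generalized Laguerre polynomial `L_n^{(α)}(x)` with real parameter `α`. -/
noncomputable def genLaguerre (n : ℕ) (α x : ℝ) : ℝ :=
  ∑ j ∈ Finset.range (n + 1),
    (-1) ^ j * ((∏ i ∈ Finset.range (n - j), (α + j + 1 + i)) / (Nat.factorial (n - j))) *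
      x ^ j / (Nat.factorial j)
/-- `P̃_n^{(α,c)}(x) = ((-1)^n / c^{2n}) ∑_{k=0}^n c^k (n-k+1)_k L_k^{(α)}(c x)`. -/
noncomputable def Pt (n : ℕ) (α c x : ℝ) : ℝ :=
  ((-1) ^ n / c ^ (2 * n)) *
    ∑ k ∈ Finset.range (n + 1),
      c ^ k * (∏ i ∈ Finset.range k, ((n : ℝ) - k + 1 + i)) * genLaguerre k α (c * x)

noncomputable def rr (a : ℝ) (k : ℕ) : ℝ := ∏ i ∈ Finset.range k, (a - k + 1 + i)

lemma rr_zero (a : ℝ) : rr a 0 = 1 := by simp [rr]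

lemma rr_succ_left (a : ℝ) (k : ℕ) : rr a (k+1) = (a - k) * rr a k := by
  unfold rr
  rw [Finset.prod_range_succ']
  push_cast
  rw [show (a - (↑k+1) + 1 + 0 : ℝ) = a - k by ring, mul_comm]
  congr 1
  refine Finset.prod_congr rfl fun i _ => by push_cast; ring

lemma rr_succ_right (a : ℝ) (k : ℕ) : rr (a+1) (k+1) = (a+1) * rr a k := by
  unfold rr
  rw [Finset.prod_range_succ]
  push_cast
  rw [show (a + 1 - (↑k+1) + 1 + ↑k : ℝ) = a + 1 by ring, mul_comm]
  congr 1
  refine Finset.prod_congr rfl fun i _ => by push_cast; ring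

lemma rr1 (a : ℝ) (k : ℕ) : (a+1) * rr a k = (a + 1 - k) * rr (a+1) k := by
  have h1 := rr_succ_left (a+1) k
  have h2 := rr_succ_right a k
  rw [show (a+1-(k:ℝ)) = (a+1) - k by ring] at h1
  linarith [h1, h2]

lemma rr_nat_zero (m k : ℕ) (h : m < k) : rr (m:ℝ) k = 0 := by
  unfold rr
  apply Finset.prod_eq_zero (i := k - 1 - m) (Finset.mem_range.mpr (by omega))
  have h2 : ((k - 1 - m : ℕ) : ℝ) = (k:ℝ) - 1 - m := by
    have h3 : k - 1 - m + m + 1 = k := by omega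
    have h4 : ((k - 1 - m + m + 1 : ℕ) : ℝ) = (k:ℝ) := by rw [h3]
    push_cast at h4
    linarith
  rw [h2]; ring

lemma lag_rec (k : ℕ) (α y : ℝ) :
    y * genLaguerre k (α+1) y =
      ((k:ℝ)+α+1) * genLaguerre k α y - ((k:ℝ)+1) * genLaguerre (k+1) α y := by
  unfold genLaguerre
  -- abbreviations
  set u : ℕ → ℝ := fun j => (-1) ^ j * ((∏ i ∈ Finset.range (k - j), ((α+1) + j + 1 + i)) / (Nat.factorial (k - j))) * y ^ j / (Nat.factorial j) with hu
  set v : ℕ → ℝ := fun j => (-1) ^ j * ((∏ i ∈ Finset.range (k - j), (α + j + 1 + i)) / (Nat.factorial (k - j))) * y ^ j / (Nat.factorial j) with hv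
  set w : ℕ → ℝ := fun j => (-1) ^ j * ((∏ i ∈ Finset.range (k + 1 - j), (α + j + 1 + i)) / (Nat.factorial (k + 1 - j))) * y ^ j / (Nat.factorial j) with hw
  have hsum : ∀ j ∈ Finset.range k, y * u j = ((k:ℝ)+α+1) * v (j+1) - ((k:ℝ)+1) * w (j+1) := by
    intro j hj
    rw [Finset.mem_range] at hj
    obtain ⟨d, hd⟩ : ∃ d, k - j = d + 1 := ⟨k - j - 1, by omega⟩
    have hd1 : k - (j+1) = d := by omega
    have hd2 : k + 1 - (j+1) = d + 1 := by omega
    have hdc : (d:ℝ) = (k:ℝ) - j - 1 := by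
      have h3 : d + j + 1 = k := by omega
      have h4 : ((d + j + 1 : ℕ) : ℝ) = (k:ℝ) := by rw [h3]
      push_cast at h4; linarith
    simp only [hu, hv, hw, hd, hd1, hd2]
    rw [Finset.prod_range_succ, Finset.prod_range_succ]
    have hP : ∀ z : ℝ, (∏ i ∈ Finset.range d, ((α+1) + j + 1 + i)) = ∏ i ∈ Finset.range d, (α + (j+1) + 1 + i) := by
      intro _; refine Finset.prod_congr rfl fun i _ => by push_cast; ring
    rw [hP 0]
    have hfac : (Nat.factorial (d+1) : ℝ) = (d+1) * Nat.factorial d := by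
      rw [Nat.factorial_succ]; push_cast; ring
    have hfacj : (Nat.factorial (j+1) : ℝ) = (j+1) * Nat.factorial j := by
      rw [Nat.factorial_succ]; push_cast; ring
    have hdne : (Nat.factorial d : ℝ) ≠ 0 := Nat.cast_ne_zero.mpr (Nat.factorial_ne_zero d)
    have hjne : (Nat.factorial j : ℝ) ≠ 0 := Nat.cast_ne_zero.mpr (Nat.factorial_ne_zero j)
    rw [hfac, hfacj]
    have hkj : ((k:ℝ) - (j:ℝ)) ≠ 0 := by
      have : (j:ℝ) < k := by exact_mod_cast hj
      intro h; linarith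
    push_cast
    rw [hdc]
    rw [show (k:ℝ) - j - 1 + 1 = k - j by ring]
    field_simp
    ring
  have htop : y * u k = -(((k:ℝ)+1) * w (k+1)) := by
    have hjne : (Nat.factorial k : ℝ) ≠ 0 := Nat.cast_ne_zero.mpr (Nat.factorial_ne_zero k)
    simp only [hu, hw, Nat.sub_self, Nat.add_sub_cancel_left]
    norm_num [Nat.factorial_succ]
    field_simp
    ring
  have hc0 : ((k:ℝ)+α+1) * v 0 = ((k:ℝ)+1) * w 0 := by
    simp only [hv, hw, Nat.sub_zero]
    rw [Finset.prod_range_succ, Nat.factorial_succ]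
    have hjne : (Nat.factorial k : ℝ) ≠ 0 := Nat.cast_ne_zero.mpr (Nat.factorial_ne_zero k)
    push_cast
    field_simp
    ring
  rw [Finset.mul_sum, Finset.sum_range_succ, Finset.sum_range_succ' v, Finset.sum_range_succ' w,
    Finset.sum_range_succ (fun i => w (i+1))]
  rw [Finset.sum_congr rfl hsum, htop]
  rw [Finset.sum_sub_distrib, ← Finset.mul_sum, ← Finset.mul_sum]
  linarith [hc0]

noncomputable def TT (α c x a : ℝ) (N : ℕ) : ℝ :=
  ∑ k ∈ Finset.range N, c^k * rr a k * genLaguerre k α (c*x)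

lemma key (m : ℕ) (α c x : ℝ) :
    c^2 * x * TT (α+1) c x ((m:ℝ)+1) (m+2) =
      -((m:ℝ)+1)*c*TT α c x (m:ℝ) (m+1) + (c*(((m:ℝ)+1)+α+1)+1)*TT α c x ((m:ℝ)+1) (m+2)
        - TT α c x ((m:ℝ)+2) (m+3) := by
  unfold TT
  set f : ℕ → ℝ := fun k => genLaguerre k α (c*x) with hf
  set g : ℕ → ℝ := fun j => c^j * rr ((m:ℝ)+1) (j-1) * ((j:ℝ) * f j) with hg
  have hm1 : ((m:ℝ)+1) = ((m+1:ℕ):ℝ) := by push_cast; ring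
  have hm2 : ((m:ℝ)+2) = ((m+2:ℕ):ℝ) := by push_cast; ring
  -- rewrite LHS using lag_rec
  have hL : c^2 * x * ∑ k ∈ Finset.range (m+2), c^k * rr ((m:ℝ)+1) k * genLaguerre k (α+1) (c*x)
      = (∑ k ∈ Finset.range (m+2), c^(k+1) * rr ((m:ℝ)+1) k * (((k:ℝ)+α+1) * f k))
        - ∑ k ∈ Finset.range (m+2), g (k+1) := by
    rw [Finset.mul_sum, ← Finset.sum_sub_distrib]
    refine Finset.sum_congr rfl fun k _ => ?_
    have h := lag_rec k α (c*x)
    have : c^2 * x * (c^k * rr ((m:ℝ)+1) k * genLaguerre k (α+1) (c*x))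
        = c^(k+1) * rr ((m:ℝ)+1) k * (c * x * genLaguerre k (α+1) (c*x)) := by
      rw [pow_succ]; ring
    rw [this, h]
    simp only [hg, hf, Nat.add_sub_cancel]
    push_cast
    ring
  rw [hL]
  -- extend all sums to range (m+3)
  have e1 : (∑ k ∈ Finset.range (m+3), c^(k+1) * rr ((m:ℝ)+1) k * (((k:ℝ)+α+1) * f k))
      = ∑ k ∈ Finset.range (m+2), c^(k+1) * rr ((m:ℝ)+1) k * (((k:ℝ)+α+1) * f k) := by
    rw [Finset.sum_range_succ, hm1, rr_nat_zero (m+1) (m+2) (by omega)]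
    ring
  have e2 : (∑ k ∈ Finset.range (m+3), g k) = ∑ k ∈ Finset.range (m+2), g (k+1) := by
    rw [Finset.sum_range_succ' g (m+2)]
    simp [hg]
  have e3 : (∑ k ∈ Finset.range (m+3), c^k * rr (m:ℝ) k * f k)
      = ∑ k ∈ Finset.range (m+1), c^k * rr (m:ℝ) k * f k := by
    rw [Finset.sum_range_succ, Finset.sum_range_succ,
      rr_nat_zero m (m+1) (by omega), rr_nat_zero m (m+2) (by omega)]
    ring
  have e4 : (∑ k ∈ Finset.range (m+3), c^k * rr ((m:ℝ)+1) k * f k)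
      = ∑ k ∈ Finset.range (m+2), c^k * rr ((m:ℝ)+1) k * f k := by
    rw [Finset.sum_range_succ, hm1, rr_nat_zero (m+1) (m+2) (by omega)]
    ring
  rw [← e1, ← e2, ← e3, ← e4]
  rw [← Finset.sum_sub_distrib, Finset.mul_sum, Finset.mul_sum, ← Finset.sum_add_distrib,
    ← Finset.sum_sub_distrib]
  refine Finset.sum_congr rfl fun k _ => ?_
  match k with
  | 0 =>
    simp only [hg, hf]
    simp [rr_zero]
    ring
  | (j+1) =>
    have F2 : rr ((m:ℝ)+1) (j+1) = ((m:ℝ)+1-j) * rr ((m:ℝ)+1) j := rr_succ_left _ j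
    have F3 : rr ((m:ℝ)+2) (j+1) = ((m:ℝ)+2) * rr ((m:ℝ)+1) j := by
      have := rr_succ_right ((m:ℝ)+1) j
      rw [show ((m:ℝ)+1+1) = (m:ℝ)+2 from by ring] at this
      exact this
    have F1 : ((m:ℝ)+1) * rr (m:ℝ) (j+1) = ((m:ℝ)-j) * (((m:ℝ)+1-j) * rr ((m:ℝ)+1) j) := by
      have := rr1 (m:ℝ) (j+1)
      rw [F2] at this
      push_cast at this
      rw [this]; ring
    simp only [hg, Nat.add_sub_cancel]
    rw [F2, F3]
    push_cast
    linear_combination (c^(j+2) * f (j+1)) * F1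



lemma Pt_eq (n : ℕ) (α c x : ℝ) :
    Pt n α c x = (-1)^n / c^(2*n) * TT α c x (n:ℝ) (n+1) := by
  simp only [Pt, TT, rr]

theorem Pt_mixed_parameter_relation (n : ℕ) (hn : 1 ≤ n) (α c x : ℝ) (hc : c ≠ 0) :
    x * Pt n (α + 1) c x =
      ((n : ℝ) / c ^ 3) * Pt (n - 1) α c x +
        ((c * ((n : ℝ) + α + 1) + 1) / c ^ 2) * Pt n α c x + Pt (n + 1) α c x := by
  obtain ⟨m, rfl⟩ : ∃ m, n = m + 1 := ⟨n - 1, by omega⟩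
  have hk := key m α c x
  rw [Pt_eq, Pt_eq, Pt_eq, Nat.add_sub_cancel, Pt_eq]
  push_cast
  rw [show 2*(m+1) = 2*m+2 from by ring, show 2*(m+1+1) = 2*m+4 from by ring,
    pow_add, pow_add]
  have h2m : (c:ℝ)^(2*m) ≠ 0 := pow_ne_zero _ hc
  calc x * ((-1)^m * (-1)^1 / (c^(2*m) * c^2) * TT (α+1) c x ((m:ℝ)+1) (m+1+1))
      = (-1)^(m+1) / (c^(2*m) * c^4) * (c^2 * x * TT (α+1) c x ((m:ℝ)+1) (m+2)) := by
        field_simp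
        ring
    _ = (-1)^(m+1) / (c^(2*m) * c^4) *
          (-((m:ℝ)+1)*c*TT α c x (m:ℝ) (m+1) + (c*(((m:ℝ)+1)+α+1)+1)*TT α c x ((m:ℝ)+1) (m+2)
            - TT α c x ((m:ℝ)+2) (m+3)) := by rw [hk]
    _ = _ := by
        field_simp
        ring
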